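/- Let ≻ be a linear order on a finite set C that is single-peaked with respect to a linear order ≻' on C, and let X ⊆ C be nonempty. Then the restriction of ≻ to X is single-peaked with respect to the restriction of ≻' to X. -/

import Mathlib

/-- The restriction of `r` to the finite set `X` is single peaked with respect to the
restriction of `r'` to `X`: letting `p` be the element of `X` ranked first within `X`
by `r`, whenever `p ≻' x ≻' y` or `y ≻' x ≻' p` (for `x, y ∈ X`) we have `x ≻ y`. -/
def SinglePeakedOn {C : Type*} (X : Finset C) (r r' : C → C → Prop) : Prop :=
  ∀ p ∈ X, (∀ x ∈ X, x ≠ p → r p x) →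
    ∀ x ∈ X, ∀ y ∈ X, ((r' p x ∧ r' x y) ∨ (r' y x ∧ r' x p)) → r x y

/-- If a linear order `r` on a finite set `C` is single peaked with respect to a linear
order `r'`, then for any nonempty `X ⊆ C` the restriction of `r` to `X` is single peaked
with respect to the restriction of `r'` to `X`. -/
theorem singlePeaked_restriction
    {C : Type*} [Fintype C] [DecidableEq C] (r r' : C → C → Prop)
    (hr : IsStrictTotalOrder C r) (hr' : IsStrictTotalOrder C r')
    (hsp : SinglePeakedOn Finset.univ r r')
    (X : Finset C) (hX : X.Nonempty) :
    SinglePeakedOn X r r' := by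
  have hasymm : ∀ a b, r a b → ¬ r b a := fun a b hab hba =>
    hr.irrefl a (hr.trans _ _ _ hab hba)
  have hirr' : ∀ a b, r' a b → a ≠ b := by
    rintro a b hab rfl; exact hr'.irrefl a hab
  -- existence of a top element in any nonempty finset w.r.t. r
  have exists_top : ∀ s : Finset C, s.Nonempty → ∃ q ∈ s, ∀ x ∈ s, x ≠ q → r q x := by
    intro s hs
    induction hs using Finset.Nonempty.cons_induction with
    | singleton a =>
        exact ⟨a, Finset.mem_singleton_self a, fun x hx hne =>
          absurd (Finset.mem_singleton.mp hx) hne⟩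
    | cons a t ha ht ih =>
        obtain ⟨q, hq, hqtop⟩ := ih
        rcases (by haveI := hr.toTrichotomous; exact trichotomous (r := r) a q) with haq | rfl | hqa
        · refine ⟨a, Finset.mem_cons_self a t, ?_⟩
          intro x hx hne
          rcases Finset.mem_cons.mp hx with rfl | hxt
          · exact absurd rfl hne
          · rcases eq_or_ne x q with rfl | hxq
            · exact haq
            · exact hr.trans _ _ _ haq (hqtop x hxt hxq)
        · exact absurd hq ha
        · refine ⟨q, Finset.mem_cons.mpr (Or.inr hq), ?_⟩
          intro x hx hne
          rcases Finset.mem_cons.mp hx with rfl | hxt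
          · exact hqa
          · exact hqtop x hxt hne
  obtain ⟨g, _, hgtop⟩ := exists_top Finset.univ ⟨hX.choose, Finset.mem_univ _⟩
  have hg : ∀ x y : C, (r' g x ∧ r' x y) ∨ (r' y x ∧ r' x g) → r x y := by
    intro x y h
    exact hsp g (Finset.mem_univ g) (fun x _ hx => hgtop x (Finset.mem_univ x) hx)
      x (Finset.mem_univ x) y (Finset.mem_univ y) h
  intro p hp hptop x hx y hy h
  rcases h with ⟨hpx, hxy⟩ | ⟨hyx, hxp⟩
  · -- p ≻' x ≻' y
    rcases (by haveI := hr'.toTrichotomous; exact trichotomous (r := r') g x) with hgx | rfl | hxg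
    · exact hg x y (Or.inl ⟨hgx, hxy⟩)
    · -- x is the global top
      exact hgtop y (Finset.mem_univ y) (Ne.symm (hirr' _ y hxy))
    · -- then x ≻ p by global single-peakedness, contradiction
      have hxp : r x p := hg x p (Or.inr ⟨hpx, hxg⟩)
      exact absurd (hptop x hx (Ne.symm (hirr' p x hpx))) (hasymm x p hxp)
  · -- y ≻' x ≻' p
    rcases (by haveI := hr'.toTrichotomous; exact trichotomous (r := r') x g) with hxg | rfl | hgx
    · exact hg x y (Or.inr ⟨hyx, hxg⟩)
    · exact hgtop y (Finset.mem_univ y) fun hy' => hr'.irrefl y (hy' ▸ hyx)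
    · have hxp' : r x p := hg x p (Or.inl ⟨hgx, hxp⟩)
      exact absurd (hptop x hx (hirr' x p hxp)) (hasymm x p hxp')
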